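/- Fix k ∈ ℕ, a finite set A₀ ⊆ ℕ, and functions g : Fin k → List ℕ → ℕ → List ℕ such that for each i : Fin k the function g i (from List ℕ × ℕ to List ℕ) is computable. Let B be the least subset of ℕ containing A₀ and closed under the operations, i.e. the intersection of all sets C ⊇ A₀ such that whenever every element of a list xs lies in C, then for every i : Fin k and every n ∈ ℕ every element of g i xs n lies in C. Then B is recursively enumerable: there exists a computable function e : ℕ → Option ℕ with B = {x | ∃ m, e m = some x}. -/

import Mathlib

open Encodable Denumerable

namespace GenRE

/-- Select among finitely many functions by a natural number index. -/
def Hsel (k : ℕ) (g : Fin k → List ℕ → ℕ → List ℕ) : ℕ × (List ℕ × ℕ) → List ℕ :=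
  fun q => if h : q.1 < k then g ⟨q.1, h⟩ q.2.1 q.2.2 else []

lemma computable_Hsel : ∀ (k : ℕ) (g : Fin k → List ℕ → ℕ → List ℕ),
    (∀ i, Computable (fun p : List ℕ × ℕ => g i p.1 p.2)) → Computable (Hsel k g)
  | 0, g, _ => (Computable.const []).of_eq (fun q => by simp [Hsel])
  | k+1, g, hg => by
    have IH := computable_Hsel k (fun i => g i.castSucc) (fun i => hg _)
    have hc : Computable fun q : ℕ × (List ℕ × ℕ) => decide (q.1 = k) :=
      (Primrec.eq.comp Primrec.fst (Primrec.const k)).decide.to_comp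
    have hf : Computable fun q : ℕ × (List ℕ × ℕ) => g ⟨k, Nat.lt_succ_self k⟩ q.2.1 q.2.2 :=
      (hg _).comp Computable.snd
    refine (Computable.cond hc hf IH).of_eq fun q => ?_
    by_cases h : q.1 = k
    · subst h; simp [Hsel]
    · have : (decide (q.1 = k)) = false := by simp [h]
      rw [this]
      simp only [cond_false, Hsel]
      rcases Nat.lt_or_ge q.1 k with h' | h'
      · rw [dif_pos h', dif_pos (Nat.lt_succ_of_lt h')]
        rfl
      · rw [dif_neg (by omega), dif_neg (by omega)]

/-- One enumeration step: decode the stage number into (index, coded index list, n). -/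
def stepF (k : ℕ) (g : Fin k → List ℕ → ℕ → List ℕ) : ℕ × List ℕ → List ℕ := fun q =>
  (Denumerable.ofNat (List ℕ) (Nat.unpair (Nat.unpair (Nat.unpair q.1).2).2).1).foldr
      (fun j b => decide (j < q.2.length) && b) true
    |>.rec []
      (Hsel k g ((Nat.unpair (Nat.unpair q.1).2).1,
        ((Denumerable.ofNat (List ℕ) (Nat.unpair (Nat.unpair (Nat.unpair q.1).2).2).1).map
          (fun j => q.2.getD j 0),
         (Nat.unpair (Nat.unpair (Nat.unpair q.1).2).2).2)))

lemma stepF_eq (k : ℕ) (g : Fin k → List ℕ → ℕ → List ℕ) (t : ℕ) (l : List ℕ) :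
    stepF k g (t, l) =
      cond ((Denumerable.ofNat (List ℕ) (Nat.unpair (Nat.unpair (Nat.unpair t).2).2).1).foldr
          (fun j b => decide (j < l.length) && b) true)
        (Hsel k g ((Nat.unpair (Nat.unpair t).2).1,
          ((Denumerable.ofNat (List ℕ) (Nat.unpair (Nat.unpair (Nat.unpair t).2).2).1).map
            (fun j => l.getD j 0),
           (Nat.unpair (Nat.unpair (Nat.unpair t).2).2).2)))
        [] := by
  unfold stepF
  cases h : (Denumerable.ofNat (List ℕ) (Nat.unpair (Nat.unpair (Nat.unpair t).2).2).1).foldr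
      (fun j b => decide (j < l.length) && b) true <;> simp [h]

lemma computable_stepF (k : ℕ) (g : Fin k → List ℕ → ℕ → List ℕ)
    (hg : ∀ i, Computable (fun p : List ℕ × ℕ => g i p.1 p.2)) :
    Computable (stepF k g) := by
  have pm : Primrec fun q : ℕ × List ℕ => (Nat.unpair q.1).2 :=
    Primrec.snd.comp (Primrec.unpair.comp Primrec.fst)
  have pim : Primrec fun q : ℕ × List ℕ => (Nat.unpair (Nat.unpair q.1).2).1 :=
    Primrec.fst.comp (Primrec.unpair.comp pm)
  have pcn : Primrec fun q : ℕ × List ℕ => Nat.unpair (Nat.unpair (Nat.unpair q.1).2).2 :=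
    Primrec.unpair.comp (Primrec.snd.comp (Primrec.unpair.comp pm))
  have pc : Primrec fun q : ℕ × List ℕ => (Nat.unpair (Nat.unpair (Nat.unpair q.1).2).2).1 :=
    Primrec.fst.comp pcn
  have pn : Primrec fun q : ℕ × List ℕ => (Nat.unpair (Nat.unpair (Nat.unpair q.1).2).2).2 :=
    Primrec.snd.comp pcn
  have pidxs : Primrec fun q : ℕ × List ℕ =>
      Denumerable.ofNat (List ℕ) (Nat.unpair (Nat.unpair (Nat.unpair q.1).2).2).1 :=
    (Primrec.ofNat (List ℕ)).comp pc
  have plen : Primrec fun q : ℕ × List ℕ => q.2.length :=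
    Primrec.list_length.comp Primrec.snd
  have pcond : Primrec fun q : ℕ × List ℕ =>
      (Denumerable.ofNat (List ℕ) (Nat.unpair (Nat.unpair (Nat.unpair q.1).2).2).1).foldr
        (fun j b => decide (j < q.2.length) && b) true := by
    have hh : Primrec fun p : (ℕ × List ℕ) × ℕ × Bool =>
        decide (p.2.1 < p.1.2.length) && p.2.2 :=
      (Primrec.cond
        (Primrec.nat_lt.comp (Primrec.fst.comp Primrec.snd) (plen.comp Primrec.fst)).decide
        (Primrec.snd.comp Primrec.snd) (Primrec.const false)).of_eq
          (fun p => by cases h : decide (p.2.1 < p.1.2.length) <;> simp [h])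
    exact Primrec.list_foldr pidxs (Primrec.const true) hh.to₂
  have pxs : Primrec fun q : ℕ × List ℕ =>
      (Denumerable.ofNat (List ℕ) (Nat.unpair (Nat.unpair (Nat.unpair q.1).2).2).1).map
        (fun j => q.2.getD j 0) :=
    Primrec.list_map pidxs
      ((Primrec.list_getD 0).comp (Primrec.snd.comp Primrec.fst) Primrec.snd).to₂
  have harg : Computable fun q : ℕ × List ℕ =>
      ((Nat.unpair (Nat.unpair q.1).2).1,
        ((Denumerable.ofNat (List ℕ) (Nat.unpair (Nat.unpair (Nat.unpair q.1).2).2).1).map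
          (fun j => q.2.getD j 0),
         (Nat.unpair (Nat.unpair (Nat.unpair q.1).2).2).2)) :=
    (pim.pair (pxs.pair pn)).to_comp
  have := Computable.cond pcond.to_comp ((computable_Hsel k g hg).comp harg)
    (Computable.const ([] : List ℕ))
  exact this.of_eq fun q => (stepF_eq k g q.1 q.2).symm

/-- The list of elements enumerated after `s` stages. -/
def Lf (k : ℕ) (g : Fin k → List ℕ → ℕ → List ℕ) (A₀ : Finset ℕ) : ℕ → List ℕ :=
  fun s => Nat.rec (A₀.sort (· ≤ ·)) (fun t IH => IH ++ stepF k g (t, IH)) s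

lemma computable_Lf (k : ℕ) (g : Fin k → List ℕ → ℕ → List ℕ) (A₀ : Finset ℕ)
    (hg : ∀ i, Computable (fun p : List ℕ × ℕ => g i p.1 p.2)) :
    Computable (Lf k g A₀) := by
  have := Computable.nat_rec (f := fun s : ℕ => s)
    (g := fun _ : ℕ => A₀.sort (· ≤ ·))
    (h := fun _ (p : ℕ × List ℕ) => p.2 ++ stepF k g p)
    Computable.id (Computable.const _)
    (Computable.list_append.comp (Computable.snd.comp Computable.snd)
      ((computable_stepF k g hg).comp Computable.snd)).to₂
  exact this.of_eq fun s => rfl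

lemma Lf_prefix (k : ℕ) (g : Fin k → List ℕ → ℕ → List ℕ) (A₀ : Finset ℕ)
    {s t : ℕ} (h : s ≤ t) : Lf k g A₀ s <+: Lf k g A₀ t := by
  induction t with
  | zero => rw [Nat.le_zero.mp h]
  | succ t IH =>
    rcases Nat.lt_or_ge s (t+1) with h' | h'
    · exact (IH (Nat.lt_succ_iff.mp h')).trans ⟨stepF k g (t, Lf k g A₀ t), rfl⟩
    · rw [Nat.le_antisymm h h']

lemma foldr_cond_iff (len : ℕ) : ∀ (idxs : List ℕ),
    (idxs.foldr (fun j b => decide (j < len) && b) true) = true ↔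
      ∀ j ∈ idxs, j < len
  | [] => by simp
  | j :: idxs => by
    by_cases h : j < len <;> simp [h, foldr_cond_iff len idxs]

/-- Soundness: everything in `Lf` belongs to every closed superset of `A₀`. -/
lemma Lf_sound (k : ℕ) (g : Fin k → List ℕ → ℕ → List ℕ) (A₀ : Finset ℕ)
    (C : Set ℕ) (hC : ↑A₀ ⊆ C)
    (hcl : ∀ xs : List ℕ, (∀ x ∈ xs, x ∈ C) → ∀ i : Fin k, ∀ n : ℕ, ∀ y ∈ g i xs n, y ∈ C) :
    ∀ s, ∀ x ∈ Lf k g A₀ s, x ∈ C := by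
  intro s
  induction s with
  | zero =>
    intro x hx
    exact hC (by simpa [Lf, Finset.mem_sort] using hx)
  | succ t IH =>
    intro x hx
    have hx' : x ∈ Lf k g A₀ t ++ stepF k g (t, Lf k g A₀ t) := hx
    rcases List.mem_append.mp hx' with hx | hx
    · exact IH x hx
    · rw [stepF_eq] at hx
      set l := Lf k g A₀ t with hl
      set idxs := Denumerable.ofNat (List ℕ)
        (Nat.unpair (Nat.unpair (Nat.unpair t).2).2).1 with hidxs
      cases hcond : idxs.foldr (fun j b => decide (j < l.length) && b) true with
      | false => rw [hcond] at hx; simp at hx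
      | true =>
        rw [hcond] at hx
        simp only [cond_true, Hsel] at hx
        split at hx
        · next him =>
          refine hcl _ ?_ _ _ _ hx
          intro x hxm
          rcases List.mem_map.mp hxm with ⟨j, hj, rfl⟩
          have hjlen : j < l.length := (foldr_cond_iff l.length idxs).mp hcond j hj
          rw [List.getD_eq_getElem l 0 hjlen]
          exact IH _ (List.getElem_mem hjlen)
        · simp at hx

/-- Completeness: the set of elements appearing in some `Lf` stage is closed. -/
lemma Lf_closed (k : ℕ) (g : Fin k → List ℕ → ℕ → List ℕ) (A₀ : Finset ℕ) :
    (↑A₀ ⊆ {x : ℕ | ∃ s, x ∈ Lf k g A₀ s}) ∧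
    ∀ xs : List ℕ, (∀ x ∈ xs, x ∈ {x : ℕ | ∃ s, x ∈ Lf k g A₀ s}) →
      ∀ i : Fin k, ∀ n : ℕ, ∀ y ∈ g i xs n, y ∈ {x : ℕ | ∃ s, x ∈ Lf k g A₀ s} := by
  constructor
  · intro x hx
    exact ⟨0, by simpa [Lf, Finset.mem_sort] using hx⟩
  · intro xs hxs i n y hy
    -- find a single stage containing all of xs
    have hstage : ∀ ys : List ℕ, (∀ x ∈ ys, ∃ s, x ∈ Lf k g A₀ s) →
        ∃ s, ∀ x ∈ ys, x ∈ Lf k g A₀ s := by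
      intro ys hys
      induction ys with
      | nil => exact ⟨0, by simp⟩
      | cons a l IHl =>
        obtain ⟨s₁, hs₁⟩ := hys a (by simp)
        obtain ⟨s₂, hs₂⟩ := IHl (fun x hx => hys x (by simp [hx]))
        refine ⟨max s₁ s₂, ?_⟩
        intro x hx
        rcases List.mem_cons.mp hx with rfl | hx
        · exact (Lf_prefix k g A₀ (le_max_left s₁ s₂)).subset hs₁
        · exact (Lf_prefix k g A₀ (le_max_right s₁ s₂)).subset (hs₂ x hx)
    obtain ⟨s, hs⟩ := hstage xs hxs
    classical
    set l := Lf k g A₀ s with hl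
    set idxs : List ℕ := xs.map (fun x => l.idxOf x) with hidxs
    set m : ℕ := Nat.pair i.val (Nat.pair (encode idxs) n) with hm
    set t : ℕ := Nat.pair s m with ht
    have hst : s ≤ t := Nat.left_le_pair s m
    have hpre : l <+: Lf k g A₀ t := Lf_prefix k g A₀ hst
    have hunp : (Nat.unpair t).2 = m := by simp [ht]
    have him : (Nat.unpair (Nat.unpair t).2).1 = i.val := by simp [hunp, hm]
    have hc : (Nat.unpair (Nat.unpair (Nat.unpair t).2).2).1 = encode idxs := by
      simp [hunp, hm]
    have hn : (Nat.unpair (Nat.unpair (Nat.unpair t).2).2).2 = n := by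
      simp [hunp, hm]
    have hofNat : Denumerable.ofNat (List ℕ)
        (Nat.unpair (Nat.unpair (Nat.unpair t).2).2).1 = idxs := by
      rw [hc]; exact Denumerable.ofNat_encode idxs
    have hjlen : ∀ j ∈ idxs, j < l.length := by
      intro j hj
      rcases List.mem_map.mp hj with ⟨x, hx, rfl⟩
      exact List.idxOf_lt_length_iff.mpr (hs x hx)
    have hjlen' : ∀ j ∈ idxs, j < (Lf k g A₀ t).length :=
      fun j hj => lt_of_lt_of_le (hjlen j hj) hpre.length_le
    have hcond : idxs.foldr
        (fun j b => decide (j < (Lf k g A₀ t).length) && b) true = true :=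
      (foldr_cond_iff _ idxs).mpr hjlen'
    have hxs_back : idxs.map (fun j => (Lf k g A₀ t).getD j 0) = xs := by
      rw [hidxs, List.map_map]
      have : ∀ x ∈ xs, ((fun j => (Lf k g A₀ t).getD j 0) ∘ fun x => l.idxOf x) x = id x := by
        intro x hx
        have h1 : l.idxOf x < l.length := List.idxOf_lt_length_iff.mpr (hs x hx)
        have h2 : l.idxOf x < (Lf k g A₀ t).length := lt_of_lt_of_le h1 hpre.length_le
        simp only [Function.comp, id]
        rw [List.getD_eq_getElem _ 0 h2, ← hpre.getElem h1]
        exact List.getElem_idxOf h1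
      rw [List.map_congr_left this, List.map_id]
    refine ⟨t + 1, ?_⟩
    show y ∈ Lf k g A₀ (t+1)
    have : Lf k g A₀ (t+1) = Lf k g A₀ t ++ stepF k g (t, Lf k g A₀ t) := rfl
    rw [this]
    refine List.mem_append.mpr (Or.inr ?_)
    rw [stepF_eq k g t]
    simp only [hofNat, him, hn, hcond, cond_true, Hsel]
    rw [dif_pos i.isLt]
    rw [hxs_back]
    exact hy

end GenRE

/-- The universe of objects generated from a finite set of initial objects by finitely
many computable conditional stream schemas is recursively enumerable. -/
theorem generated_universe_re (k : ℕ) (A₀ : Finset ℕ)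
    (g : Fin k → List ℕ → ℕ → List ℕ)
    (hg : ∀ i : Fin k, Computable (fun p : List ℕ × ℕ => g i p.1 p.2)) :
    ∃ e : ℕ → Option ℕ, Computable e ∧
      (⋂₀ {C : Set ℕ | ↑A₀ ⊆ C ∧
          ∀ xs : List ℕ, (∀ x ∈ xs, x ∈ C) → ∀ i : Fin k, ∀ n : ℕ, ∀ y ∈ g i xs n, y ∈ C})
        = {x : ℕ | ∃ m : ℕ, e m = some x} := by
  refine ⟨fun m => (GenRE.Lf k g A₀ (Nat.unpair m).1)[(Nat.unpair m).2]?, ?_, ?_⟩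
  · exact Computable.list_getElem?.comp
      ((GenRE.computable_Lf k g A₀ hg).comp
        ((Primrec.fst.comp Primrec.unpair).to_comp))
      ((Primrec.snd.comp Primrec.unpair).to_comp)
  · have hS : {x : ℕ | ∃ m : ℕ,
        (GenRE.Lf k g A₀ (Nat.unpair m).1)[(Nat.unpair m).2]? = some x}
        = {x : ℕ | ∃ s, x ∈ GenRE.Lf k g A₀ s} := by
      ext x
      constructor
      · rintro ⟨m, hm⟩
        exact ⟨(Nat.unpair m).1, List.mem_of_getElem? hm⟩
      · rintro ⟨s, hsx⟩
        obtain ⟨j, hj⟩ := List.get_of_mem hsx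
        exact ⟨Nat.pair s j.val, by
          simp only [Nat.unpair_pair]
          rw [List.getElem?_eq_getElem j.isLt, ← hj]; rfl⟩
    rw [hS]
    apply Set.Subset.antisymm
    · exact Set.sInter_subset_of_mem ⟨(GenRE.Lf_closed k g A₀).1, (GenRE.Lf_closed k g A₀).2⟩
    · rintro x ⟨s, hsx⟩ C ⟨hC1, hC2⟩
      exact GenRE.Lf_sound k g A₀ C hC1 hC2 s x hsx
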